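/- Let ℓ₁,…,ℓₙ ∈ ℝ, let s ≥ 0, and let 0 < α₋ ≤ α₊ and 0 < α'₋ ≤ α'₊ satisfy α₊/α₋ ≤ α'₊/α'₋ and α₋ ≤ α'₋. If max over subsets I ⊆ {1,…,n} of (α₋ Σ_{i∈I} ℓ_i + α₊ Σ_{i∈Iᶜ} ℓ_i) = s, then max over subsets I ⊆ {1,…,n} of (α'₋ Σ_{i∈I} ℓ_i + α'₊ Σ_{i∈Iᶜ} ℓ_i) ≥ s. -/

import Mathlib

/-- the pointwise Hamiltonian inequality under the ratio condition
`α₊/α₋ ≤ α'₊/α'₋` and `α₋ ≤ α'₋` (Remark 3.1). -/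
theorem hamiltonian_ratio_comparison
    (n : ℕ) (ℓ : Fin n → ℝ) (s : ℝ) (hs : 0 ≤ s)
    (αm αp αm' αp' : ℝ)
    (h1 : 0 < αm) (h2 : αm ≤ αp) (h1' : 0 < αm') (h2' : αm' ≤ αp')
    (hratio : αp / αm ≤ αp' / αm') (hle : αm ≤ αm')
    (heq : (Finset.univ : Finset (Finset (Fin n))).sup' Finset.univ_nonempty
      (fun I => αm * ∑ i ∈ I, ℓ i + αp * ∑ i ∈ Iᶜ, ℓ i) = s) :
    (Finset.univ : Finset (Finset (Fin n))).sup' Finset.univ_nonempty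
      (fun I => αm' * ∑ i ∈ I, ℓ i + αp' * ∑ i ∈ Iᶜ, ℓ i) ≥ s := by
  classical
  set I₀ : Finset (Fin n) := Finset.univ.filter (fun i => ℓ i < 0) with hI₀
  set T : ℝ := ∑ i, ℓ i with hT
  have hcompl : ∀ I : Finset (Fin n), ∑ i ∈ Iᶜ, ℓ i = T - ∑ i ∈ I, ℓ i := by
    intro I
    have := Finset.sum_add_sum_compl I ℓ
    linarith
  set A : ℝ := ∑ i ∈ I₀, ℓ i with hA
  have hAle : A ≤ 0 := by
    apply Finset.sum_nonpos
    intro i hi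
    have := (Finset.mem_filter.mp hi).2
    linarith
  have hB : (0:ℝ) ≤ T - A := by
    have : ∑ i ∈ I₀ᶜ, ℓ i = T - A := hcompl I₀
    rw [← this]
    apply Finset.sum_nonneg
    intro i hi
    have : ¬ ℓ i < 0 := by
      intro h
      exact (Finset.mem_compl.mp hi) (Finset.mem_filter.mpr ⟨Finset.mem_univ i, h⟩)
    linarith
  -- For every I, the sum over I₀ is the smallest possible sum over a subset.
  have hmin : ∀ I : Finset (Fin n), A ≤ ∑ i ∈ I, ℓ i := by
    intro I
    have h1' : ∑ i ∈ I₀, ℓ i = ∑ i ∈ I₀ ∩ I, ℓ i + ∑ i ∈ I₀ \ I, ℓ i :=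
      (Finset.sum_inter_add_sum_sdiff I₀ I ℓ).symm
    have h2' : ∑ i ∈ I, ℓ i = ∑ i ∈ I ∩ I₀, ℓ i + ∑ i ∈ I \ I₀, ℓ i :=
      (Finset.sum_inter_add_sum_sdiff I I₀ ℓ).symm
    have e : ∑ i ∈ I₀ ∩ I, ℓ i = ∑ i ∈ I ∩ I₀, ℓ i := by
      rw [Finset.inter_comm]
    have hd1 : ∑ i ∈ I₀ \ I, ℓ i ≤ 0 := by
      apply Finset.sum_nonpos
      intro i hi
      have := (Finset.mem_filter.mp (Finset.mem_sdiff.mp hi).1).2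
      linarith
    have hd2 : (0:ℝ) ≤ ∑ i ∈ I \ I₀, ℓ i := by
      apply Finset.sum_nonneg
      intro i hi
      have hni : ¬ ℓ i < 0 := by
        intro h
        exact (Finset.mem_sdiff.mp hi).2 (Finset.mem_filter.mpr ⟨Finset.mem_univ i, h⟩)
      linarith
    rw [hA]
    linarith
  -- The sup for (αm, αp) equals the value at I₀.
  have hval : αm * A + αp * (T - A) = s := by
    rw [← heq]
    apply le_antisymm
    · have := Finset.le_sup' (f := fun I => αm * ∑ i ∈ I, ℓ i + αp * ∑ i ∈ Iᶜ, ℓ i)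
        (Finset.mem_univ I₀)
      simp only [hcompl I₀] at this; exact this
    · apply Finset.sup'_le
      intro I _
      rw [hcompl I]
      have := hmin I
      nlinarith [hmin I]
  -- The primed sup is at least the primed value at I₀.
  have hge : (Finset.univ : Finset (Finset (Fin n))).sup' Finset.univ_nonempty
      (fun I => αm' * ∑ i ∈ I, ℓ i + αp' * ∑ i ∈ Iᶜ, ℓ i) ≥ αm' * A + αp' * (T - A) := by
    have := Finset.le_sup' (f := fun I => αm' * ∑ i ∈ I, ℓ i + αp' * ∑ i ∈ Iᶜ, ℓ i)
      (Finset.mem_univ I₀)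
    simp only [hcompl I₀] at this; exact this
  -- ratio condition: αm' * (αp / αm) ≤ αp'
  have hr : αm' * (αp / αm) ≤ αp' := by
    have := mul_le_mul_of_nonneg_left hratio (le_of_lt h1')
    calc αm' * (αp / αm) ≤ αm' * (αp' / αm') := this
      _ = αp' := by field_simp
  have key : αm' * A + αp' * (T - A) ≥ (αm' / αm) * s := by
    have h3 : (αm' / αm) * s = αm' * A + (αm' * (αp / αm)) * (T - A) := by
      rw [← hval]; field_simp
    nlinarith [mul_le_mul_of_nonneg_right hr hB]
  have hfin : (αm' / αm) * s ≥ s := by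
    have : (1:ℝ) ≤ αm' / αm := (one_le_div h1).mpr hle
    nlinarith
  linarith
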